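/- arXiv:1011.3779 — 2 statements merged into one kernel-verified Lean document; each statement's English description precedes it below -/
import Mathlib

section
/- Let n ≥ 2 and let M be a linear subspace of the space of skew-symmetric n×n complex matrices such that every nonzero matrix in M has rank 2. Then at least one of the following holds: (i) there exists a 3-dimensional subspace W ⊆ ℂⁿ such that the column space of every A ∈ M is contained in W; or (ii) there exists a nonzero vector w ∈ ℂⁿ such that every A ∈ M can be written as A = w vᵀ − v wᵀ for some v ∈ ℂⁿ. -/
open Matrix Module

section Aux

variable {n : ℕ}

lemma mrank_def {m k : Type*} [Fintype k] (A : Matrix m k ℂ) :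
    A.rank = Module.finrank ℂ (LinearMap.range A.mulVecLin) := rfl

lemma matrix_ext_mulVec {m k : ℕ} {A B : Matrix (Fin m) (Fin k) ℂ}
    (h : ∀ z, A *ᵥ z = B *ᵥ z) : A = B := by
  ext i j
  have := congrFun (h (Pi.single j 1)) i
  simpa [Matrix.mulVec_single] using this

lemma vecMulVec_mulVec (a b z : Fin n → ℂ) :
    (vecMulVec a b) *ᵥ z = (b ⬝ᵥ z) • a := by
  funext i
  simp [vecMulVec, Matrix.mulVec, dotProduct, Finset.mul_sum, Finset.sum_mul,
    mul_comm, mul_assoc, mul_left_comm]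

lemma skew_dot {A : Matrix (Fin n) (Fin n) ℂ} (hA : Aᵀ = -A) (x y : Fin n → ℂ) :
    x ⬝ᵥ A *ᵥ y = -(y ⬝ᵥ A *ᵥ x) := by
  rw [Matrix.dotProduct_mulVec, ← Matrix.mulVec_transpose, hA, Matrix.neg_mulVec,
    neg_dotProduct, dotProduct_comm]

lemma skew_dot_self {A : Matrix (Fin n) (Fin n) ℂ} (hA : Aᵀ = -A) (x : Fin n → ℂ) :
    x ⬝ᵥ A *ᵥ x = 0 := by
  have := skew_dot hA x x
  linear_combination this / 2

lemma dot_surjective {k : ℕ} (v : Fin k → Fin n → ℂ) (hv : LinearIndependent ℂ v)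
    (c : Fin k → ℂ) : ∃ z : Fin n → ℂ, ∀ i, v i ⬝ᵥ z = c i := by
  set V : Matrix (Fin k) (Fin n) ℂ := Matrix.of v with hV
  have hmv : ∀ z : Fin k → ℂ, Vᵀ *ᵥ z = ∑ i, z i • v i := by
    intro z; funext j
    simp [Matrix.mulVec, dotProduct, Matrix.transpose, hV, mul_comm,
      Finset.sum_apply]
  have hinj : Function.Injective (Vᵀ.mulVecLin) := by
    rw [← LinearMap.ker_eq_bot, Submodule.eq_bot_iff]
    intro z hz
    have h0 : ∑ i, z i • v i = 0 := by
      rw [← hmv]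
      simpa only [LinearMap.mem_ker, Matrix.mulVecLin_apply] using hz
    funext i
    exact Fintype.linearIndependent_iff.mp hv z h0 i
  have hrk : V.rank = k := by
    rw [← Matrix.rank_transpose, mrank_def, LinearMap.finrank_range_of_inj hinj]
    simp
  have htop : LinearMap.range V.mulVecLin = ⊤ := by
    apply Submodule.eq_top_of_finrank_eq
    rw [← mrank_def, hrk]; simp
  have hc : c ∈ LinearMap.range V.mulVecLin := htop ▸ Submodule.mem_top
  obtain ⟨z, hz⟩ := hc
  refine ⟨z, fun i => ?_⟩
  have := congrFun hz i
  simpa [Matrix.mulVecLin_apply, Matrix.mulVec, hV] using this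

lemma skew_decomp {A : Matrix (Fin n) (Fin n) ℂ} (hA : Aᵀ = -A) (hr : A.rank = 2)
    {w : Fin n → ℂ} (hw : w ∈ LinearMap.range A.mulVecLin) (hw0 : w ≠ 0) :
    ∃ v : Fin n → ℂ, A = vecMulVec w v - vecMulVec v w ∧
      LinearIndependent ℂ ![w, v] ∧
      LinearMap.range A.mulVecLin = Submodule.span ℂ {w, v} := by
  obtain ⟨u₁, hu₁⟩ := hw
  rw [Matrix.mulVecLin_apply] at hu₁
  -- find u₂ with c ≠ 0
  have hAtu : Aᵀ *ᵥ u₁ ≠ 0 := by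
    rw [hA, Matrix.neg_mulVec, hu₁]
    simpa using hw0
  obtain ⟨j, hj⟩ := Function.ne_iff.mp hAtu
  set u₂ : Fin n → ℂ := Pi.single j 1 with hu₂def
  set c : ℂ := u₁ ⬝ᵥ A *ᵥ u₂ with hcdef
  have hc : c ≠ 0 := by
    have : c = (Aᵀ *ᵥ u₁) j := by
      rw [hcdef, Matrix.dotProduct_mulVec, ← Matrix.mulVec_transpose, hu₂def]
      simp [dotProduct_single]
    rw [this]; simpa using hj
  set v' : Fin n → ℂ := A *ᵥ u₂ with hv'def
  have hu₁w : u₁ ⬝ᵥ w = 0 := by rw [← hu₁]; exact skew_dot_self hA u₁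
  have hu₂v' : u₂ ⬝ᵥ v' = 0 := skew_dot_self hA u₂
  have hu₂w : u₂ ⬝ᵥ w = -c := by
    rw [← hu₁, skew_dot hA u₂ u₁, hcdef]
  have hu₁v' : u₁ ⬝ᵥ v' = c := rfl
  -- independence of v', w
  have hind' : LinearIndependent ℂ ![v', w] := by
    rw [linearIndependent_fin2]
    constructor
    · simpa using hw0
    · intro a ha
      simp only [Matrix.cons_val_one, Matrix.head_cons, Matrix.cons_val_zero] at ha
      apply hc
      rw [← hu₁v', ← ha]
      simp [dotProduct_smul, hu₁w]
  have hfr : Module.finrank ℂ (LinearMap.range A.mulVecLin) = 2 := by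
    rw [← mrank_def, hr]
  have hspan' : Submodule.span ℂ {v', w} = LinearMap.range A.mulVecLin := by
    apply Submodule.eq_of_le_of_finrank_le
    · rw [Submodule.span_le]
      rintro x (rfl | rfl)
      · exact ⟨u₂, rfl⟩
      · exact ⟨u₁, hu₁⟩
    · rw [hfr]
      have : ({v', w} : Set (Fin n → ℂ)) = Set.range ![v', w] := by
        simp [Matrix.range_cons, Matrix.range_empty, Set.pair_comm]
      rw [this, finrank_span_eq_card hind']
      simp
  set v : Fin n → ℂ := c⁻¹ • v' with hvdef
  have hveq : ∀ z, A *ᵥ z = (v ⬝ᵥ z) • w - (w ⬝ᵥ z) • v := by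
    intro z
    have hmem : A *ᵥ z ∈ Submodule.span ℂ ({v', w} : Set (Fin n → ℂ)) := by
      rw [hspan']; exact ⟨z, rfl⟩
    obtain ⟨α, β, hαβ⟩ := Submodule.mem_span_pair.mp hmem
    have e1 : u₁ ⬝ᵥ A *ᵥ z = α * c := by
      rw [← hαβ]
      simp [dotProduct_add, dotProduct_smul, hu₁v', hu₁w, smul_eq_mul]
    have e1' : u₁ ⬝ᵥ A *ᵥ z = -(w ⬝ᵥ z) := by
      rw [skew_dot hA u₁ z, hu₁, dotProduct_comm]
    have e2 : u₂ ⬝ᵥ A *ᵥ z = β * (-c) := by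
      rw [← hαβ]
      simp [dotProduct_add, dotProduct_smul, hu₂v', hu₂w, smul_eq_mul]
    have e2' : u₂ ⬝ᵥ A *ᵥ z = -(v' ⬝ᵥ z) := by
      rw [skew_dot hA u₂ z, ← hv'def, dotProduct_comm]
    have hα : α = -(c⁻¹ * (w ⬝ᵥ z)) := by
      field_simp
      linear_combination -e1 + e1'
    have hβ : β = c⁻¹ * (v' ⬝ᵥ z) := by
      field_simp
      linear_combination e2 - e2'
    rw [← hαβ, hα, hβ, hvdef]
    have hd : (c⁻¹ • v') ⬝ᵥ z = c⁻¹ * (v' ⬝ᵥ z) := by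
      simp [smul_dotProduct, smul_eq_mul]
    rw [hd]
    module
  refine ⟨v, ?_, ?_, ?_⟩
  · apply matrix_ext_mulVec
    intro z
    rw [Matrix.sub_mulVec, _root_.vecMulVec_mulVec, _root_.vecMulVec_mulVec, hveq z]
  · rw [linearIndependent_fin2]
    have hv'0 : v' ≠ 0 := by
      intro h0
      apply hc; rw [← hu₁v', h0]; simp
    constructor
    · simp only [Matrix.cons_val_one, Matrix.head_cons]
      simp [hvdef, smul_eq_zero, inv_eq_zero, hc, hv'0]
    · intro a ha
      simp only [Matrix.cons_val_one, Matrix.head_cons, Matrix.cons_val_zero] at ha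
      apply hw0
      have h1 : u₁ ⬝ᵥ w = a * c⁻¹ * c := by
        rw [← ha, hvdef]
        simp [dotProduct_smul, hu₁v', smul_eq_mul]
        ring
      rw [hu₁w] at h1
      have ha0 : a = 0 := by
        field_simp at h1
        tauto
      rw [ha0] at ha
      simp [hvdef] at ha
      exact ha.symm
  · rw [← hspan']
    have h1 : v ∈ Submodule.span ℂ ({v', w} : Set (Fin n → ℂ)) :=
      Submodule.smul_mem _ _ (Submodule.subset_span (by simp))
    have h2 : v' ∈ Submodule.span ℂ ({w, v} : Set (Fin n → ℂ)) := by
      have : v' = c • v := by rw [hvdef, smul_smul]; field_simp; rw [one_smul]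
      rw [this]
      exact Submodule.smul_mem _ _ (Submodule.subset_span (by simp))
    apply le_antisymm
    · rw [Submodule.span_le]
      rintro x (rfl | rfl)
      · exact h2
      · exact Submodule.subset_span (by simp)
    · rw [Submodule.span_le]
      rintro x (rfl | rfl)
      · exact Submodule.subset_span (by simp)
      · exact h1

lemma rank_sum_ne {x y u t : Fin n → ℂ} (hf : LinearIndependent ℂ ![x, y, u, t]) :
    ((vecMulVec x y - vecMulVec y x) + (vecMulVec u t - vecMulVec t u)).rank ≠ 2 := by
  intro h2
  set C : Matrix (Fin n) (Fin n) ℂ :=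
    (vecMulVec x y - vecMulVec y x) + (vecMulVec u t - vecMulVec t u) with hCdef
  have hCv : ∀ z, C *ᵥ z = ((y ⬝ᵥ z) • x - (x ⬝ᵥ z) • y) + ((t ⬝ᵥ z) • u - (u ⬝ᵥ z) • t) := by
    intro z
    rw [hCdef, Matrix.add_mulVec, Matrix.sub_mulVec, Matrix.sub_mulVec,
      vecMulVec_mulVec, vecMulVec_mulVec, vecMulVec_mulVec, vecMulVec_mulVec]
  have key : ∀ c : Fin 4 → ℂ,
      ((c 1) • x - (c 0) • y) + ((c 3) • u - (c 2) • t) ∈ LinearMap.range C.mulVecLin := by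
    intro c
    obtain ⟨z, hz⟩ := dot_surjective ![x, y, u, t] hf c
    refine ⟨z, ?_⟩
    rw [Matrix.mulVecLin_apply, hCv z]
    have h0 := hz 0; have h1 := hz 1; have h2' := hz 2; have h3 := hz 3
    simp only [Matrix.cons_val_zero, Matrix.cons_val_one, Matrix.head_cons] at h0 h1
    have e2 : ![x,y,u,t] 2 = u := rfl
    have e3 : ![x,y,u,t] 3 = t := rfl
    rw [e2] at h2'; rw [e3] at h3
    rw [h0, h1, h2', h3]
  have hx : x ∈ LinearMap.range C.mulVecLin := by
    have := key ![0, 1, 0, 0]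
    simpa using this
  have hy : y ∈ LinearMap.range C.mulVecLin := by
    have := key ![-1, 0, 0, 0]
    simpa using this
  have hu : u ∈ LinearMap.range C.mulVecLin := by
    have := key ![0, 0, 0, 1]
    simpa using this
  have hind3 : LinearIndependent ℂ ![x, y, u] := by
    have h := hf.comp (Fin.castSucc) (Fin.castSucc_injective 3)
    have : ![x, y, u, t] ∘ Fin.castSucc = ![x, y, u] := by
      funext i; fin_cases i <;> rfl
    rwa [this] at h
  have hle : Submodule.span ℂ (Set.range ![x, y, u]) ≤ LinearMap.range C.mulVecLin := by
    rw [Submodule.span_le]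
    rintro s ⟨i, rfl⟩
    fin_cases i
    · exact hx
    · exact hy
    · exact hu
  have h3 : (3 : ℕ) ≤ 2 := by
    have hcard := finrank_span_eq_card hind3
    simp only [Fintype.card_fin] at hcard
    have := Submodule.finrank_mono hle
    rw [hcard, ← mrank_def, h2] at this
    exact this
  omega

end Aux
lemma range_ne_bot {n : ℕ} {A : Matrix (Fin n) (Fin n) ℂ} (hr : A.rank = 2) :
    LinearMap.range A.mulVecLin ≠ ⊥ := by
  intro hbot
  rw [mrank_def, hbot] at hr
  simp at hr

lemma ranges_meet {n : ℕ} (M : Submodule ℂ (Matrix (Fin n) (Fin n) ℂ))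
    (hskew : ∀ A ∈ M, Aᵀ = -A) (hrank : ∀ A ∈ M, A ≠ 0 → A.rank = 2)
    {A B : Matrix (Fin n) (Fin n) ℂ} (hAM : A ∈ M) (hBM : B ∈ M)
    (hA0 : A ≠ 0) (hB0 : B ≠ 0) :
    LinearMap.range A.mulVecLin ⊓ LinearMap.range B.mulVecLin ≠ ⊥ := by
  intro hbot
  obtain ⟨x, hxP, hx0⟩ := (Submodule.ne_bot_iff _).mp (range_ne_bot (hrank A hAM hA0))
  obtain ⟨y, hAxy, hindA, hPxy⟩ := skew_decomp (hskew A hAM) (hrank A hAM hA0) hxP hx0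
  obtain ⟨u, huQ, hu0⟩ := (Submodule.ne_bot_iff _).mp (range_ne_bot (hrank B hBM hB0))
  obtain ⟨t, hBut, hindB, hQut⟩ := skew_decomp (hskew B hBM) (hrank B hBM hB0) huQ hu0
  have hAB0 : A + B ≠ 0 := by
    intro h
    have hBA : B = -A := by
      have := congrArg (fun X => X - A) h
      simpa [add_sub_cancel_left, sub_eq_iff_eq_add] using this
    have hranges : LinearMap.range B.mulVecLin = LinearMap.range A.mulVecLin := by
      apply le_antisymm
      · rintro _ ⟨z, rfl⟩
        exact ⟨-z, by simp [hBA, Matrix.mulVecLin_apply, Matrix.neg_mulVec, Matrix.mulVec_neg]⟩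
      · rintro _ ⟨z, rfl⟩
        exact ⟨-z, by simp [hBA, Matrix.mulVecLin_apply, Matrix.neg_mulVec, Matrix.mulVec_neg]⟩
    rw [hranges, inf_idem] at hbot
    exact range_ne_bot (hrank A hAM hA0) hbot
  have hind4 : LinearIndependent ℂ ![x, y, u, t] := by
    rw [Fintype.linearIndependent_iff]
    intro g hg
    rw [Fin.sum_univ_four] at hg
    have e0 : ![x,y,u,t] 0 = x := rfl
    have e1 : ![x,y,u,t] 1 = y := rfl
    have e2 : ![x,y,u,t] 2 = u := rfl
    have e3 : ![x,y,u,t] 3 = t := rfl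
    rw [e0, e1, e2, e3] at hg
    have hg' : (g 0 • x + g 1 • y) + (g 2 • u + g 3 • t) = 0 := by
      rw [← hg]; abel
    have hp : g 0 • x + g 1 • y ∈ LinearMap.range A.mulVecLin := by
      rw [hPxy]; exact Submodule.mem_span_pair.mpr ⟨g 0, g 1, rfl⟩
    have hq : g 0 • x + g 1 • y ∈ LinearMap.range B.mulVecLin := by
      rw [hQut]
      refine Submodule.mem_span_pair.mpr ⟨-(g 2), -(g 3), ?_⟩
      rw [neg_smul, neg_smul, ← neg_add]
      have h := eq_neg_iff_add_eq_zero.mpr hg'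
      exact h.symm
    have hmem : g 0 • x + g 1 • y ∈ (⊥ : Submodule ℂ (Fin n → ℂ)) :=
      hbot ▸ Submodule.mem_inf.mpr ⟨hp, hq⟩
    have h01 : g 0 • x + g 1 • y = 0 := by simpa using hmem
    have h23 : g 2 • u + g 3 • t = 0 := by
      have h := hg'
      rw [h01, zero_add] at h
      exact h
    have hA2 := Fintype.linearIndependent_iff.mp hindA ![g 0, g 1] (by
      rw [Fin.sum_univ_two]
      simp only [Matrix.cons_val_zero, Matrix.cons_val_one, Matrix.head_cons]
      exact h01)
    have hB2 := Fintype.linearIndependent_iff.mp hindB ![g 2, g 3] (by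
      rw [Fin.sum_univ_two]
      simp only [Matrix.cons_val_zero, Matrix.cons_val_one, Matrix.head_cons]
      exact h23)
    intro i
    fin_cases i
    · simpa using hA2 0
    · simpa using hA2 1
    · simpa using hB2 0
    · simpa using hB2 1
  have hr2 := hrank (A + B) (M.add_mem hAM hBM) hAB0
  rw [hAxy, hBut] at hr2
  exact rank_sum_ne hind4 hr2

/-- A linear space of skew-symmetric complex matrices of constant rank 2
consists either of matrices whose column spaces lie in a fixed 3-dimensional subspace
(lines in a fixed plane) or of matrices of the form `w vᵀ − v wᵀ` for a fixed `w`
(lines through a fixed point). -/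
theorem stmt_12 (n : ℕ) (hn : 2 ≤ n)
    (M : Submodule ℂ (Matrix (Fin n) (Fin n) ℂ))
    (hskew : ∀ A ∈ M, Aᵀ = -A)
    (hrank : ∀ A ∈ M, A ≠ 0 → A.rank = 2) :
    (∃ W : Submodule ℂ (Fin n → ℂ), Module.finrank ℂ W = 3 ∧
      ∀ A ∈ M, LinearMap.range (Matrix.mulVecLin A) ≤ W) ∨
    (∃ w : Fin n → ℂ, w ≠ 0 ∧
      ∀ A ∈ M, ∃ v : Fin n → ℂ, A = Matrix.vecMulVec w v - Matrix.vecMulVec v w) := by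
  classical
  by_cases hcase : ∃ w : Fin n → ℂ, w ≠ 0 ∧ ∀ A ∈ M, A ≠ 0 → w ∈ LinearMap.range A.mulVecLin
  · right
    obtain ⟨w, hw0, hwmem⟩ := hcase
    refine ⟨w, hw0, fun A hAM => ?_⟩
    by_cases hA0 : A = 0
    · refine ⟨0, ?_⟩
      ext i j
      simp [hA0, vecMulVec]
    · obtain ⟨v, hv, -, -⟩ :=
        skew_decomp (hskew A hAM) (hrank A hAM hA0) (hwmem A hAM hA0) hw0
      exact ⟨v, hv⟩
  · left
    push_neg at hcase
    -- hcase : ∀ w, w ≠ 0 → ∃ A ∈ M, A ≠ 0 ∧ w ∉ range A.mulVecLin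
    have hfr2 : ∀ A ∈ M, A ≠ 0 → finrank ℂ (LinearMap.range A.mulVecLin) = 2 := by
      intro A hA h0
      rw [← mrank_def, hrank A hA h0]
    have meet := fun {A B} hAM hBM hA0 hB0 => ranges_meet M hskew hrank (A := A) (B := B) hAM hBM hA0 hB0
    -- get a first nonzero element
    have i0 : Fin n := ⟨0, by omega⟩
    have hw₀ : (Pi.single i0 1 : Fin n → ℂ) ≠ 0 := by
      intro h
      have := congrFun h i0
      simp at this
    obtain ⟨A, hAM, hA0, -⟩ := hcase _ hw₀
    obtain ⟨x, hxP, hx0⟩ := (Submodule.ne_bot_iff _).mp (range_ne_bot (hrank A hAM hA0))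
    obtain ⟨B, hBM, hB0, hxB⟩ := hcase x hx0
    set P := LinearMap.range A.mulVecLin with hPdef
    set Q := LinearMap.range B.mulVecLin with hQdef
    have hLbot : P ⊓ Q ≠ ⊥ := meet hAM hBM hA0 hB0
    have hfrP : finrank ℂ P = 2 := hfr2 A hAM hA0
    have hfrQ : finrank ℂ Q = 2 := hfr2 B hBM hB0
    have hLP : P ⊓ Q < P := by
      apply lt_of_le_of_ne inf_le_left
      intro h
      exact hxB ((Submodule.mem_inf.mp (h ▸ hxP)).2)
    have hfrL : finrank ℂ ↥(P ⊓ Q) = 1 := by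
      have hlt : finrank ℂ ↥(P ⊓ Q) < 2 := hfrP ▸ Submodule.finrank_lt_finrank_of_lt hLP
      have hne : finrank ℂ ↥(P ⊓ Q) ≠ 0 := by
        intro h
        exact hLbot (Submodule.finrank_eq_zero.mp h)
      omega
    have hfrS : finrank ℂ ↥(P ⊔ Q) = 3 := by
      have := Submodule.finrank_sup_add_finrank_inf_eq P Q
      omega
    obtain ⟨p, hpL, hp0⟩ := (Submodule.ne_bot_iff _).mp hLbot
    have hpS : p ∈ P ⊔ Q := Submodule.mem_sup_left (Submodule.mem_inf.mp hpL).1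
    have hLspan : P ⊓ Q = Submodule.span ℂ {p} := by
      symm
      apply Submodule.eq_of_le_of_finrank_le
      · rwa [Submodule.span_le, Set.singleton_subset_iff]
      · rw [hfrL, finrank_span_singleton hp0]
    -- dichotomy
    have key : ∀ C ∈ M, C ≠ 0 →
        (LinearMap.range C.mulVecLin ≤ P ⊔ Q ∨ p ∈ LinearMap.range C.mulVecLin) := by
      intro C hCM hC0
      obtain ⟨a, haPR, ha0⟩ := (Submodule.ne_bot_iff _).mp (meet hAM hCM hA0 hC0)
      obtain ⟨b, hbQR, hb0⟩ := (Submodule.ne_bot_iff _).mp (meet hBM hCM hB0 hC0)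
      obtain ⟨haP, haR⟩ := Submodule.mem_inf.mp haPR
      obtain ⟨hbQ, hbR⟩ := Submodule.mem_inf.mp hbQR
      by_cases hba : b ∈ Submodule.span ℂ {a}
      · right
        obtain ⟨μ, hμ⟩ := Submodule.mem_span_singleton.mp hba
        have hμ0 : μ ≠ 0 := by
          rintro rfl
          rw [zero_smul] at hμ
          exact hb0 hμ.symm
        have haQ : a ∈ Q := by
          have : a = μ⁻¹ • b := by
            rw [← hμ, smul_smul, inv_mul_cancel₀ hμ0, one_smul]
          rw [this]
          exact Q.smul_mem _ hbQ
        have haL : a ∈ P ⊓ Q := Submodule.mem_inf.mpr ⟨haP, haQ⟩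
        rw [hLspan] at haL
        obtain ⟨d, hd⟩ := Submodule.mem_span_singleton.mp haL
        have hd0 : d ≠ 0 := by
          rintro rfl
          rw [zero_smul] at hd
          exact ha0 hd.symm
        have : p = d⁻¹ • a := by
          rw [← hd, smul_smul, inv_mul_cancel₀ hd0, one_smul]
        rw [this]
        exact Submodule.smul_mem _ _ haR
      · left
        have hindab : LinearIndependent ℂ ![b, a] := by
          rw [linearIndependent_fin2]
          refine ⟨by simpa using ha0, fun μ hμ => ?_⟩
          simp only [Matrix.cons_val_one, Matrix.head_cons, Matrix.cons_val_zero] at hμ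
          exact hba (Submodule.mem_span_singleton.mpr ⟨μ, hμ⟩)
        have hspanR : Submodule.span ℂ {b, a} = LinearMap.range C.mulVecLin := by
          apply Submodule.eq_of_le_of_finrank_le
          · rw [Submodule.span_le]
            rintro s (rfl | rfl)
            · exact hbR
            · exact haR
          · rw [hfr2 C hCM hC0]
            have hset : ({b, a} : Set (Fin n → ℂ)) = Set.range ![b, a] := by
              simp [Matrix.range_cons, Matrix.range_empty, Set.pair_comm]
            rw [hset, finrank_span_eq_card hindab]
            simp
        rw [← hspanR, Submodule.span_le]
        rintro s (rfl | rfl)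
        · exact Submodule.mem_sup_right hbQ
        · exact Submodule.mem_sup_left haP
    refine ⟨P ⊔ Q, hfrS, ?_⟩
    intro C hCM
    by_cases hC0 : C = 0
    · rw [hC0, Matrix.mulVecLin_zero, LinearMap.range_zero]
      exact bot_le
    rcases key C hCM hC0 with h | hpR
    · exact h
    by_contra hRS
    obtain ⟨a, haR, haS⟩ := SetLike.not_le_iff_exists.mp hRS
    have hindap : LinearIndependent ℂ ![a, p] := by
      rw [linearIndependent_fin2]
      refine ⟨by simpa using hp0, fun μ hμ => ?_⟩
      simp only [Matrix.cons_val_one, Matrix.head_cons, Matrix.cons_val_zero] at hμ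
      exact haS (hμ ▸ Submodule.smul_mem _ _ hpS)
    have hspanR : Submodule.span ℂ {a, p} = LinearMap.range C.mulVecLin := by
      apply Submodule.eq_of_le_of_finrank_le
      · rw [Submodule.span_le]
        rintro s (rfl | rfl)
        · exact haR
        · exact hpR
      · rw [hfr2 C hCM hC0]
        have hset : ({a, p} : Set (Fin n → ℂ)) = Set.range ![a, p] := by
          simp [Matrix.range_cons, Matrix.range_empty, Set.pair_comm]
        rw [hset, finrank_span_eq_card hindap]
        simp
    have hRSL : ∀ z, z ∈ LinearMap.range C.mulVecLin → z ∈ P ⊔ Q →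
        z ∈ Submodule.span ℂ {p} := by
      intro z hzR hzS
      rw [← hspanR] at hzR
      obtain ⟨α, β, hz⟩ := Submodule.mem_span_pair.mp hzR
      have hα0 : α = 0 := by
        by_contra hα
        apply haS
        have h1 : α • a = z - β • p := by rw [← hz]; abel
        have h2 : α • a ∈ P ⊔ Q := by
          rw [h1]
          exact Submodule.sub_mem _ hzS (Submodule.smul_mem _ _ hpS)
        have h3 := Submodule.smul_mem _ α⁻¹ h2
        rwa [smul_smul, inv_mul_cancel₀ hα, one_smul] at h3
      rw [← hz, hα0, zero_smul, zero_add]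
      exact Submodule.mem_span_singleton.mpr ⟨β, rfl⟩
    obtain ⟨D, hDM, hD0, hpD⟩ := hcase p hp0
    rcases key D hDM hD0 with hDS | hpRD
    · obtain ⟨r, hr, hr0⟩ := (Submodule.ne_bot_iff _).mp (meet hCM hDM hC0 hD0)
      obtain ⟨hrC, hrD⟩ := Submodule.mem_inf.mp hr
      have hrL := hRSL r hrC (hDS hrD)
      obtain ⟨e, he⟩ := Submodule.mem_span_singleton.mp hrL
      have he0 : e ≠ 0 := by
        rintro rfl
        rw [zero_smul] at he
        exact hr0 he.symm
      apply hpD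
      have : p = e⁻¹ • r := by
        rw [← he, smul_smul, inv_mul_cancel₀ he0, one_smul]
      rw [this]
      exact Submodule.smul_mem _ _ hrD
    · exact hpD hpRD
end

section
/- For (a,b,c) ∈ ℂ³, let A(a,b,c) be the 5×5 complex skew-symmetric matrix (indices 0–4) whose strictly upper-triangular entries are A₀₃ = a, A₀₄ = b, A₁₂ = a, A₁₃ = b, A₁₄ = c, A₂₃ = c, with all other strictly upper-triangular entries equal to 0 and A_{j,i} = −A_{i,j}. Then for every (a,b,c) ≠ (0,0,0) the matrix A(a,b,c) has rank exactly 4. In particular the span of A(1,0,0), A(0,1,0), A(0,0,1) is a 3-dimensional space of skew-symmetric 5×5 matrices of constant rank 4. -/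
open Matrix

/-- The strictly upper-triangular part of the matrix of Statement 15:
`A₀₃ = a, A₀₄ = b, A₁₂ = a, A₁₃ = b, A₁₄ = c, A₂₃ = c`. -/
def upperPart (a b c : ℂ) : Matrix (Fin 5) (Fin 5) ℂ :=
  Matrix.of !![0, 0, 0, a, b;
               0, 0, a, b, c;
               0, 0, 0, c, 0;
               0, 0, 0, 0, 0;
               0, 0, 0, 0, 0]

/-- The skew-symmetric matrix `A(a,b,c)` of Statement 15. -/
def skewA (a b c : ℂ) : Matrix (Fin 5) (Fin 5) ℂ :=
  upperPart a b c - (upperPart a b c)ᵀ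
open Matrix

@[simp] lemma of_matrix_apply' {m n α : Type*} (M : Matrix m n α) (i : m) (j : n) :
    (Matrix.of M : Matrix m n α) i j = M i j := rfl

lemma skewA_transpose (a b c : ℂ) : (skewA a b c)ᵀ = -(skewA a b c) := by
  simp only [skewA, transpose_sub, transpose_transpose, neg_sub]

lemma det_skewA (a b c : ℂ) : (skewA a b c).det = 0 := by
  have h : (skewA a b c).det = -(skewA a b c).det := by
    conv_lhs => rw [← det_transpose, skewA_transpose, det_neg]
    norm_num
  linear_combination h / 2

lemma rank_skewA_le (a b c : ℂ) : (skewA a b c).rank ≤ 4 := by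
  by_contra hlt
  push_neg at hlt
  have hle : (skewA a b c).rank ≤ 5 := by
    simpa using (skewA a b c).rank_le_card_width
  have h5 : (skewA a b c).rank = 5 := le_antisymm hle hlt
  have hrange : LinearMap.range (skewA a b c).mulVecLin = ⊤ := by
    apply Submodule.eq_top_of_finrank_eq
    rw [← Matrix.rank, h5]
    simp [Module.finrank_pi]
  have hsurj : Function.Surjective (skewA a b c).mulVec := by
    intro v
    obtain ⟨w, hw⟩ := LinearMap.range_eq_top.mp hrange v
    exact ⟨w, hw⟩
  have := Matrix.mulVec_surjective_iff_isUnit.mp hsurj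
  have hdet := (Matrix.isUnit_iff_isUnit_det _).mp this
  rw [det_skewA] at hdet
  exact (isUnit_iff_ne_zero.mp hdet) rfl
lemma submatrix_eq_mul (A : Matrix (Fin 5) (Fin 5) ℂ) (f g : Fin 4 → Fin 5) :
    A.submatrix f g = ((1 : Matrix (Fin 5) (Fin 5) ℂ).submatrix f id) * A *
      ((1 : Matrix (Fin 5) (Fin 5) ℂ).submatrix id g) := by
  ext i j
  simp [mul_apply, one_apply, Finset.sum_ite_eq, Finset.sum_ite_eq']

lemma rank_submatrix_le' (A : Matrix (Fin 5) (Fin 5) ℂ) (f g : Fin 4 → Fin 5) :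
    (A.submatrix f g).rank ≤ A.rank := by
  rw [submatrix_eq_mul A f g]
  exact le_trans (Matrix.rank_mul_le_left _ _)
    (le_trans (Matrix.rank_mul_le_right _ _) le_rfl)

lemma rank_ge_of_submatrix (A : Matrix (Fin 5) (Fin 5) ℂ) (f g : Fin 4 → Fin 5)
    (h : (A.submatrix f g).det ≠ 0) : 4 ≤ A.rank := by
  have h1 : (A.submatrix f g).rank = 4 := by
    rw [Matrix.rank_of_isUnit _ ((Matrix.isUnit_iff_isUnit_det _).mpr (isUnit_iff_ne_zero.mpr h))]
    simp
  calc 4 = (A.submatrix f g).rank := h1.symm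
    _ ≤ A.rank := rank_submatrix_le' A f g
lemma sub1 (a b c : ℂ) : (skewA a b c).submatrix ![0,1,2,3] ![0,1,2,3] =
    !![0,0,0,a; 0,0,a,b; 0,-a,0,c; -a,-b,-c,0] := by
  ext i j
  fin_cases i <;> fin_cases j <;> simp [skewA, upperPart, vecHead, vecTail]

lemma det_sub1 (a b c : ℂ) :
    (!![0,0,0,a; 0,0,a,b; 0,-a,0,c; -a,-b,-c,0] : Matrix (Fin 4) (Fin 4) ℂ).det = a^4 := by
  rw [Matrix.det_succ_row_zero]
  simp [Fin.sum_univ_succ, det_fin_three, Fin.succAbove_of_castSucc_lt, Fin.succAbove_of_lt_succ, Fin.succAbove_of_le_castSucc, Fin.succAbove_of_succ_le]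
  ring
lemma sub2 (a b c : ℂ) : (skewA a b c).submatrix ![1,2,3,4] ![1,2,3,4] =
    !![0,a,b,c; -a,0,c,0; -b,-c,0,0; -c,0,0,0] := by
  ext i j
  fin_cases i <;> fin_cases j <;> simp [skewA, upperPart, vecHead, vecTail]

lemma det_sub2 (a b c : ℂ) :
    (!![0,a,b,c; -a,0,c,0; -b,-c,0,0; -c,0,0,0] : Matrix (Fin 4) (Fin 4) ℂ).det = c^4 := by
  rw [Matrix.det_succ_row_zero]
  simp [Fin.sum_univ_succ, det_fin_three, Fin.succAbove_of_castSucc_lt, Fin.succAbove_of_lt_succ, Fin.succAbove_of_le_castSucc, Fin.succAbove_of_succ_le]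
  ring

lemma sub3 (a b c : ℂ) : (skewA a b c).submatrix ![0,1,3,4] ![0,1,3,4] =
    !![0,0,a,b; 0,0,b,c; -a,-b,0,0; -b,-c,0,0] := by
  ext i j
  fin_cases i <;> fin_cases j <;> simp [skewA, upperPart, vecHead, vecTail]

lemma det_sub3 (a b c : ℂ) :
    (!![0,0,a,b; 0,0,b,c; -a,-b,0,0; -b,-c,0,0] : Matrix (Fin 4) (Fin 4) ℂ).det = (b^2-a*c)^2 := by
  rw [Matrix.det_succ_row_zero]
  simp [Fin.sum_univ_succ, det_fin_three, Fin.succAbove_of_castSucc_lt, Fin.succAbove_of_lt_succ, Fin.succAbove_of_le_castSucc, Fin.succAbove_of_succ_le]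
  ring

lemma rank_skewA (a b c : ℂ) (h : (a, b, c) ≠ (0, 0, 0)) : (skewA a b c).rank = 4 := by
  refine le_antisymm (rank_skewA_le a b c) ?_
  by_cases ha : a ≠ 0
  · refine rank_ge_of_submatrix _ ![0,1,2,3] ![0,1,2,3] ?_
    rw [sub1, det_sub1]; exact pow_ne_zero _ ha
  by_cases hc : c ≠ 0
  · refine rank_ge_of_submatrix _ ![1,2,3,4] ![1,2,3,4] ?_
    rw [sub2, det_sub2]; exact pow_ne_zero _ hc
  push_neg at ha hc
  have hb : b ≠ 0 := by
    intro hb; exact h (by simp [ha, hb, hc])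
  refine rank_ge_of_submatrix _ ![0,1,3,4] ![0,1,3,4] ?_
  rw [sub3, det_sub3, ha, hc]
  simpa using pow_ne_zero 4 hb
lemma skewA_lin (x y z : ℂ) :
    x • skewA 1 0 0 + y • skewA 0 1 0 + z • skewA 0 0 1 = skewA x y z := by
  ext i j
  fin_cases i <;> fin_cases j <;> simp [skewA, upperPart, vecHead, vecTail]

lemma skewA_zero : skewA 0 0 0 = 0 := by
  ext i j
  fin_cases i <;> fin_cases j <;> simp [skewA, upperPart, vecHead, vecTail]

lemma skewA_coords (x y z : ℂ) (h : skewA x y z = 0) : x = 0 ∧ y = 0 ∧ z = 0 := by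
  refine ⟨?_, ?_, ?_⟩
  · have := congrFun (congrFun h 0) 3
    simpa [skewA, upperPart, vecHead, vecTail] using this
  · have := congrFun (congrFun h 0) 4
    simpa [skewA, upperPart, vecHead, vecTail] using this
  · have := congrFun (congrFun h 1) 4
    simpa [skewA, upperPart, vecHead, vecTail] using this

lemma range_eq : Set.range ![skewA 1 0 0, skewA 0 1 0, skewA 0 0 1] =
    ({skewA 1 0 0, skewA 0 1 0, skewA 0 0 1} : Set (Matrix (Fin 5) (Fin 5) ℂ)) := by
  ext x
  constructor
  · rintro ⟨i, rfl⟩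
    fin_cases i <;> simp
  · rintro (rfl | rfl | rfl)
    exacts [⟨0, rfl⟩, ⟨1, rfl⟩, ⟨2, rfl⟩]

lemma mem_span_iff (A : Matrix (Fin 5) (Fin 5) ℂ) :
    A ∈ Submodule.span ℂ ({skewA 1 0 0, skewA 0 1 0, skewA 0 0 1} :
      Set (Matrix (Fin 5) (Fin 5) ℂ)) → ∃ x y z : ℂ, A = skewA x y z := by
  intro hA
  rw [← range_eq] at hA
  obtain ⟨g, hg⟩ := (Submodule.mem_span_range_iff_exists_fun ℂ).mp hA
  refine ⟨g 0, g 1, g 2, ?_⟩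
  rw [← hg, Fin.sum_univ_three]
  simp [skewA_lin]

theorem stmt_15' :
    (∀ a b c : ℂ, (a, b, c) ≠ (0, 0, 0) → (skewA a b c).rank = 4) ∧
    Module.finrank ℂ (Submodule.span ℂ
      ({skewA 1 0 0, skewA 0 1 0, skewA 0 0 1} : Set (Matrix (Fin 5) (Fin 5) ℂ))) = 3 ∧
    (∀ A ∈ Submodule.span ℂ
      ({skewA 1 0 0, skewA 0 1 0, skewA 0 0 1} : Set (Matrix (Fin 5) (Fin 5) ℂ)),
      Aᵀ = -A) ∧
    (∀ A ∈ Submodule.span ℂ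
      ({skewA 1 0 0, skewA 0 1 0, skewA 0 0 1} : Set (Matrix (Fin 5) (Fin 5) ℂ)),
      A ≠ 0 → A.rank = 4) := by
  refine ⟨rank_skewA, ?_, ?_, ?_⟩
  · rw [← range_eq]
    rw [finrank_span_eq_card ?_]
    · simp
    · rw [Fintype.linearIndependent_iff]
      intro g hg
      rw [Fin.sum_univ_three] at hg
      simp only [Matrix.cons_val_zero, Matrix.cons_val_one, Matrix.head_cons,
        Matrix.cons_val_two, Matrix.tail_cons] at hg
      rw [skewA_lin] at hg
      obtain ⟨h0, h1, h2⟩ := skewA_coords _ _ _ hg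
      intro i
      fin_cases i <;> assumption
  · intro A hA
    obtain ⟨x, y, z, rfl⟩ := mem_span_iff A hA
    exact skewA_transpose x y z
  · intro A hA hne
    obtain ⟨x, y, z, rfl⟩ := mem_span_iff A hA
    apply rank_skewA
    intro hxyz
    apply hne
    have h1 : x = 0 := (Prod.ext_iff.mp hxyz).1
    have h2 : y = 0 := (Prod.ext_iff.mp (Prod.ext_iff.mp hxyz).2).1
    have h3 : z = 0 := (Prod.ext_iff.mp (Prod.ext_iff.mp hxyz).2).2
    rw [h1, h2, h3, skewA_zero]

/-- The matrix `A(a,b,c)` has rank exactly 4 for `(a,b,c) ≠ (0,0,0)`;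
in particular the span of `A(1,0,0), A(0,1,0), A(0,0,1)` is a 3-dimensional space of
skew-symmetric `5×5` complex matrices of constant rank 4. -/
theorem stmt_15 :
    (∀ a b c : ℂ, (a, b, c) ≠ (0, 0, 0) → (skewA a b c).rank = 4) ∧
    Module.finrank ℂ (Submodule.span ℂ
      ({skewA 1 0 0, skewA 0 1 0, skewA 0 0 1} : Set (Matrix (Fin 5) (Fin 5) ℂ))) = 3 ∧
    (∀ A ∈ Submodule.span ℂ
      ({skewA 1 0 0, skewA 0 1 0, skewA 0 0 1} : Set (Matrix (Fin 5) (Fin 5) ℂ)),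
      Aᵀ = -A) ∧
    (∀ A ∈ Submodule.span ℂ
      ({skewA 1 0 0, skewA 0 1 0, skewA 0 0 1} : Set (Matrix (Fin 5) (Fin 5) ℂ)),
      A ≠ 0 → A.rank = 4) := by
  exact stmt_15'
end
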